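/- Let V be an m×k matrix over a field F such that every entry of V is a distinct monomial in algebraically independent variables x₁, …, x_t over the prime field, and additionally each row of V involves a disjoint set of variables from every other row (rows are 'completely independent'). If m = k, then det(V) ≠ 0. -/

import Mathlib

/-- Full-rank criterion: a square matrix whose entries are monomials, distinct
within each row, with disjoint variable sets across rows, has nonzero determinant. -/
theorem stmt_12 (F : Type*) [Field F] (m t : ℕ)
    (d : Fin m → Fin m → (Fin t →₀ ℕ))
    (V : Matrix (Fin m) (Fin m) (MvPolynomial (Fin t) F))
    (hmono : ∀ i j, V i j = MvPolynomial.monomial (d i j) (1 : F))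
    (hdistinct : ∀ i j j', j ≠ j' → d i j ≠ d i j')
    (hdisj : ∀ i i', i ≠ i' → ∀ j j', Disjoint (d i j).support (d i' j').support) :
    V.det ≠ 0 := by
  classical
  set f : Equiv.Perm (Fin m) → (Fin t →₀ ℕ) := fun σ => ∑ i, d i (σ i) with hf
  -- auxiliary: value of the sum at a variable in row i's support
  have aux : ∀ (g : Fin m → Fin m) (i : Fin m) (j : Fin m) (v : Fin t),
      v ∈ (d i j).support → (∑ i', d i' (g i')) v = d i (g i) v := by
    intro g i j v hv
    rw [Finsupp.finset_sum_apply]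
    rw [Finset.sum_eq_single i]
    · intro i' _ hne
      by_contra h
      have hv' : v ∈ (d i' (g i')).support := by
        simp [Finsupp.mem_support_iff]
        exact fun h0 => h (by simp [h0])
      exact Finset.disjoint_left.mp (hdisj i i' (Ne.symm hne) j (g i')) hv hv'
    · intro h; exact absurd (Finset.mem_univ i) h
  -- injectivity of f
  have hinj : Function.Injective f := by
    intro σ τ h
    refine Equiv.ext fun i => ?_
    by_contra hne
    apply hdistinct i (σ i) (τ i) hne
    ext v
    by_cases h1 : v ∈ (d i (σ i)).support
    · have e1 := aux (fun i' => σ i') i (σ i) v h1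
      have e2 := aux (fun i' => τ i') i (σ i) v h1
      have hh := DFunLike.congr_fun h v
      simp only [hf] at hh
      rw [e1, e2] at hh
      exact hh
    · by_cases h2 : v ∈ (d i (τ i)).support
      · have e1 := aux (fun i' => σ i') i (τ i) v h2
        have e2 := aux (fun i' => τ i') i (τ i) v h2
        have hh := DFunLike.congr_fun h v
        simp only [hf] at hh
        rw [e1, e2] at hh
        exact hh
      · simp only [Finsupp.notMem_support_iff] at h1 h2
        rw [h1, h2]
  have hdet : V.det = ∑ σ : Equiv.Perm (Fin m),
      (Equiv.Perm.sign σ : ℤ) • MvPolynomial.monomial (f σ) (1 : F) := by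
    rw [← Matrix.det_transpose, Matrix.det_apply]
    refine Finset.sum_congr rfl fun σ _ => ?_
    congr 1
    rw [hf, MvPolynomial.monomial_sum_one]
    refine Finset.prod_congr rfl fun i _ => ?_
    simp [Matrix.transpose_apply, hmono]
  intro h0
  have hc := congrArg (MvPolynomial.coeff (f 1)) hdet
  rw [h0] at hc
  simp only [MvPolynomial.coeff_sum, MvPolynomial.coeff_smul,
    MvPolynomial.coeff_monomial, MvPolynomial.coeff_zero] at hc
  rw [Finset.sum_eq_single (1 : Equiv.Perm (Fin m))] at hc
  · simp at hc
  · intro σ _ hne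
    rw [if_neg (fun h => hne (hinj h)), smul_zero]
  · intro h; exact absurd (Finset.mem_univ _) h
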